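/- Let μ be a finite, compactly supported measure on ℝ^d that is absolutely continuous with respect to Lebesgue measure, let x_1, …, x_N ∈ ℝ^d (N ≥ 1) be pairwise distinct, and let ν_1, …, ν_N ∈ ℝ. If ψ ∈ ℝ^N satisfies μ(Lag_i^ψ) = ν_i for every i, then ψ is a global maximizer of the Kantorovich functional: K(ψ') ≤ K(ψ) for all ψ' ∈ ℝ^N. -/

import Mathlib

open MeasureTheory

/-- The Laguerre cell of index `i` for sites `x` and weights `ψ`. -/
def Lag {d N : ℕ} (x : Fin N → EuclideanSpace ℝ (Fin d)) (ψ : Fin N → ℝ) (i : Fin N) :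
    Set (EuclideanSpace ℝ (Fin d)) :=
  {p | ∀ j, j ≠ i → ‖p - x i‖ ^ 2 - ψ i ≤ ‖p - x j‖ ^ 2 - ψ j}

/-- The semi-discrete Kantorovich dual functional. -/
noncomputable def Kfun {d N : ℕ} (μ : Measure (EuclideanSpace ℝ (Fin d)))
    (x : Fin N → EuclideanSpace ℝ (Fin d)) (ν : Fin N → ℝ) (ψ : Fin N → ℝ) : ℝ :=
  (∫ p, (⨅ i : Fin N, (‖p - x i‖ ^ 2 - ψ i)) ∂μ) + ∑ i : Fin N, ψ i * ν i

/-- A hyperplane has Lebesgue measure zero. -/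
lemma hyperplane_null {d : ℕ} (v : EuclideanSpace ℝ (Fin d)) (hv : v ≠ 0) (c : ℝ) :
    volume {p : EuclideanSpace ℝ (Fin d) | (inner ℝ v p : ℝ) = c} = 0 := by
  set f : EuclideanSpace ℝ (Fin d) →L[ℝ] ℝ := innerSL ℝ v with hf
  have hker : LinearMap.ker (f : EuclideanSpace ℝ (Fin d) →ₗ[ℝ] ℝ) ≠ ⊤ := by
    intro h
    have hv2 : v ∈ LinearMap.ker (f : EuclideanSpace ℝ (Fin d) →ₗ[ℝ] ℝ) := h ▸ Submodule.mem_top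
    have : (inner ℝ v v : ℝ) = 0 := hv2
    exact hv (inner_self_eq_zero.mp this)
  have hvsq : ‖v‖ ^ 2 ≠ 0 := pow_ne_zero _ (norm_ne_zero_iff.mpr hv)
  set p0 : EuclideanSpace ℝ (Fin d) := (c / ‖v‖ ^ 2) • v with hp0def
  have hp0 : (inner ℝ v p0 : ℝ) = c := by
    rw [hp0def, real_inner_smul_right, real_inner_self_eq_norm_sq]
    field_simp
  have hset : {p : EuclideanSpace ℝ (Fin d) | (inner ℝ v p : ℝ) = c}
      = ↑(AffineSubspace.mk' p0 (LinearMap.ker (f : EuclideanSpace ℝ (Fin d) →ₗ[ℝ] ℝ))) := by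
    ext p
    simp only [Set.mem_setOf_eq, AffineSubspace.mem_coe,
      AffineSubspace.mem_mk', LinearMap.mem_ker, ContinuousLinearMap.coe_coe]
    have : f (p -ᵥ p0) = inner ℝ v p - c := by
      simp only [hf, vsub_eq_sub]
      rw [innerSL_apply_apply, inner_sub_right, hp0]
    rw [this]
    constructor
    · intro h; rw [h]; ring
    · intro h; linarith [sub_eq_zero.mp h]
  rw [hset]
  refine Measure.addHaar_affineSubspace volume _ (fun h => hker ?_)
  have := congrArg AffineSubspace.direction h
  rwa [AffineSubspace.direction_mk', AffineSubspace.direction_top] at this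

/-- if the Laguerre cells of `ψ` carry the prescribed masses,
then `ψ` is a global maximizer of the Kantorovich functional. -/
theorem kantorovich_maximizer_of_masses {d N : ℕ} (hN : 1 ≤ N)
    (μ : Measure (EuclideanSpace ℝ (Fin d))) [IsFiniteMeasure μ]
    (hsupp : ∃ K : Set (EuclideanSpace ℝ (Fin d)), IsCompact K ∧ μ Kᶜ = 0)
    (hac : μ ≪ volume)
    (x : Fin N → EuclideanSpace ℝ (Fin d)) (hx : Function.Injective x)
    (ν : Fin N → ℝ) (ψ : Fin N → ℝ)
    (hmass : ∀ i : Fin N, (μ (Lag x ψ i)).toReal = ν i) :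
    ∀ ψ' : Fin N → ℝ, Kfun μ x ν ψ' ≤ Kfun μ x ν ψ := by
  intro ψ'
  classical
  haveI : Nonempty (Fin N) := ⟨⟨0, hN⟩⟩
  obtain ⟨K, hK, hKc⟩ := hsupp
  -- the cost terms
  set b : Fin N → EuclideanSpace ℝ (Fin d) → ℝ := fun i p => ‖p - x i‖ ^ 2 with hb
  have hbcont : ∀ i, Continuous (b i) := fun i =>
    ((continuous_id.sub continuous_const).norm.pow 2)
  have hbnonneg : ∀ i p, 0 ≤ b i p := fun i p => sq_nonneg _
  -- integrability of the inf function
  have hint : ∀ φ : Fin N → ℝ, Integrable (fun p => ⨅ i, (b i p - φ i)) μ := by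
    intro φ
    obtain ⟨R, hR⟩ := hK.isBounded.exists_norm_le
    set i0 : Fin N := Classical.arbitrary _
    set L : ℝ := ⨅ i, (-φ i) with hL
    set U : ℝ := (R + ‖x i0‖) ^ 2 + |φ i0| with hU
    have hmeas : Measurable fun p => ⨅ i, (b i p - φ i) :=
      Measurable.iInf fun i => ((hbcont i).measurable.sub measurable_const)
    refine Integrable.mono' (integrable_const (max U (-L))) hmeas.aestronglyMeasurable ?_
    have haeK : ∀ᵐ p ∂μ, p ∈ K := by
      rw [MeasureTheory.ae_iff]
      exact hKc
    filter_upwards [haeK] with p hp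
    have hlow : L ≤ ⨅ i, (b i p - φ i) := by
      refine le_ciInf fun i => ?_
      have : L ≤ -φ i := ciInf_le (Set.finite_range _).bddBelow i
      linarith [hbnonneg i p]
    have hup : (⨅ i, (b i p - φ i)) ≤ U := by
      refine le_trans (ciInf_le (Set.finite_range _).bddBelow i0) ?_
      have h1 : ‖p - x i0‖ ≤ R + ‖x i0‖ := by
        calc ‖p - x i0‖ ≤ ‖p‖ + ‖x i0‖ := norm_sub_le _ _
        _ ≤ R + ‖x i0‖ := by have := hR p hp; linarith
      have h2 : ‖p - x i0‖ ^ 2 ≤ (R + ‖x i0‖) ^ 2 :=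
        pow_le_pow_left₀ (norm_nonneg _) h1 2
      have := neg_abs_le (φ i0)
      simp only [hb]
      rw [hU]
      linarith
    rw [Real.norm_eq_abs, abs_le]
    constructor
    · have : -(max U (-L)) ≤ L := by
        have : L ≥ -(max U (-L)) := by
          have := le_max_right U (-L); linarith
        linarith
      linarith
    · exact le_trans hup (le_max_left _ _)
  -- overlaps of distinct Laguerre cells are μ-null
  have hoverlap : ∀ i j : Fin N, i ≠ j → μ (Lag x ψ i ∩ Lag x ψ j) = 0 := by
    intro i j hij
    apply hac
    set v : EuclideanSpace ℝ (Fin d) := (2 : ℝ) • (x j - x i) with hv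
    have hvne : v ≠ 0 := by
      rw [hv]
      exact smul_ne_zero two_ne_zero (sub_ne_zero.mpr fun h => hij (hx h).symm)
    set c : ℝ := ‖x j‖ ^ 2 - ‖x i‖ ^ 2 + ψ i - ψ j with hc
    refine measure_mono_null ?_ (hyperplane_null v hvne c)
    intro p ⟨hpi, hpj⟩
    have h1 : ‖p - x i‖ ^ 2 - ψ i ≤ ‖p - x j‖ ^ 2 - ψ j := hpi j (Ne.symm hij)
    have h2 : ‖p - x j‖ ^ 2 - ψ j ≤ ‖p - x i‖ ^ 2 - ψ i := hpj i hij
    have heq : ‖p - x i‖ ^ 2 - ψ i = ‖p - x j‖ ^ 2 - ψ j := le_antisymm h1 h2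
    rw [norm_sub_sq_real, norm_sub_sq_real] at heq
    show (inner ℝ v p : ℝ) = c
    rw [hv, real_inner_smul_left, inner_sub_left, hc]
    have hxj : (inner ℝ (x j) p : ℝ) = inner ℝ p (x j) := real_inner_comm _ _
    have hxi : (inner ℝ (x i) p : ℝ) = inner ℝ p (x i) := real_inner_comm _ _
    rw [hxj, hxi]
    linarith
  -- Laguerre cells are measurable
  have hLagMeas : ∀ i, MeasurableSet (Lag x ψ i) := by
    intro i
    have : Lag x ψ i = ⋂ j, ⋂ (_ : j ≠ i),
        {p : EuclideanSpace ℝ (Fin d) | ‖p - x i‖ ^ 2 - ψ i ≤ ‖p - x j‖ ^ 2 - ψ j} := by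
      ext p; simp [Lag, Set.mem_iInter]
    rw [this]
    refine MeasurableSet.iInter fun j => MeasurableSet.iInter fun _ => ?_
    exact measurableSet_le ((hbcont i).measurable.sub measurable_const)
      ((hbcont j).measurable.sub measurable_const)
  -- disjointified cells
  set T : Fin N → Set (EuclideanSpace ℝ (Fin d)) := fun i => Lag x ψ i \ ⋃ (j : Fin N) (_ : j < i), Lag x ψ j with hT
  have hTmeas : ∀ i, MeasurableSet (T i) :=
    fun i => (hLagMeas i).diff (MeasurableSet.iUnion fun j =>
      MeasurableSet.iUnion fun _ => hLagMeas j)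
  have hTsub : ∀ i, T i ⊆ Lag x ψ i := fun i => Set.diff_subset
  have hTdisj : ∀ i j, i ≠ j → ∀ p, p ∈ T i → p ∉ T j := by
    intro i j hij p hpi hpj
    rcases lt_or_gt_of_ne hij with h | h
    · exact hpj.2 (Set.mem_iUnion.mpr ⟨i, Set.mem_iUnion.mpr ⟨h, hpi.1⟩⟩)
    · exact hpi.2 (Set.mem_iUnion.mpr ⟨j, Set.mem_iUnion.mpr ⟨h, hpj.1⟩⟩)
  -- every point lies in some T i
  have hTcover : ∀ p : EuclideanSpace ℝ (Fin d), ∃ i, p ∈ T i := by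
    intro p
    obtain ⟨i0, hi0⟩ := Finite.exists_min (fun i => b i p - ψ i)
    have hmem : p ∈ Lag x ψ i0 := fun j _ => hi0 j
    set s : Finset (Fin N) := Finset.univ.filter (fun i => p ∈ Lag x ψ i) with hs
    have hsne : s.Nonempty := ⟨i0, by simp [hs, hmem]⟩
    refine ⟨s.min' hsne, ?_, ?_⟩
    · have := s.min'_mem hsne; simp [hs] at this; exact this
    · intro hmem'
      obtain ⟨j, hj⟩ := Set.mem_iUnion.mp hmem'
      obtain ⟨hjlt, hjmem⟩ := Set.mem_iUnion.mp hj
      have : s.min' hsne ≤ j := s.min'_le j (by simp [hs, hjmem])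
      exact absurd this (not_le.mpr hjlt)
  -- μ(T i) = μ(Lag i)
  have hTmass : ∀ i, μ (T i) = μ (Lag x ψ i) := by
    intro i
    have hnull : μ (Lag x ψ i ∩ ⋃ (j : Fin N) (_ : j < i), Lag x ψ j) = 0 := by
      have hsub : (Lag x ψ i ∩ ⋃ (j : Fin N) (_ : j < i), Lag x ψ j) ⊆
          ⋃ (j : Fin N) (_ : j ≠ i), (Lag x ψ i ∩ Lag x ψ j) := by
        rintro p ⟨hp1, hp2⟩
        obtain ⟨j, hj⟩ := Set.mem_iUnion.mp hp2
        obtain ⟨hjlt, hjmem⟩ := Set.mem_iUnion.mp hj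
        exact Set.mem_iUnion.mpr ⟨j, Set.mem_iUnion.mpr ⟨hjlt.ne,
          Set.mem_inter hp1 hjmem⟩⟩
      exact measure_mono_null hsub (measure_iUnion_null fun j =>
        measure_iUnion_null fun hji => hoverlap i j (Ne.symm hji))
    have : T i = Lag x ψ i \ (Lag x ψ i ∩ ⋃ (j : Fin N) (_ : j < i), Lag x ψ j) := by
      rw [Set.diff_self_inter]
    rw [this, measure_diff_null hnull]
  -- pointwise key inequality
  have hpt : ∀ p : EuclideanSpace ℝ (Fin d), (⨅ i, (b i p - ψ' i)) ≤ (⨅ i, (b i p - ψ i)) +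
      ∑ j, (T j).indicator (fun _ => ψ j - ψ' j) p := by
    intro p
    obtain ⟨i, hpi⟩ := hTcover p
    have hsum : ∑ j, (T j).indicator (fun _ => ψ j - ψ' j) p = ψ i - ψ' i := by
      rw [Finset.sum_eq_single i]
      · simp [Set.indicator_of_mem hpi]
      · intro j _ hji
        exact Set.indicator_of_notMem (hTdisj i j (Ne.symm hji) p hpi) _
      · simp
    rw [hsum]
    have h1 : (⨅ j, (b j p - ψ' j)) ≤ b i p - ψ' i :=
      ciInf_le (Set.finite_range _).bddBelow i
    have h2 : b i p - ψ i ≤ ⨅ j, (b j p - ψ j) := by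
      refine le_ciInf fun j => ?_
      by_cases hji : j = i
      · subst hji; exact le_rfl
      · exact hTsub i hpi j hji
    linarith
  -- integrate
  have hindint : ∀ j : Fin N, Integrable ((T j).indicator (fun _ => ψ j - ψ' j)) μ :=
    fun j => (integrable_const _).indicator (hTmeas j)
  have hrhsint : Integrable (fun p => (⨅ i, (b i p - ψ i)) +
      ∑ j, (T j).indicator (fun _ => ψ j - ψ' j) p) μ :=
    (hint ψ).add (integrable_finset_sum _ fun j _ => hindint j)
  have hmono : (∫ p, (⨅ i, (b i p - ψ' i)) ∂μ) ≤
      ∫ p, ((⨅ i, (b i p - ψ i)) + ∑ j, (T j).indicator (fun _ => ψ j - ψ' j) p) ∂μ :=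
    integral_mono (hint ψ') hrhsint hpt
  have hsplit : (∫ p, ((⨅ i, (b i p - ψ i)) +
      ∑ j, (T j).indicator (fun _ => ψ j - ψ' j) p) ∂μ)
      = (∫ p, (⨅ i, (b i p - ψ i)) ∂μ) + ∑ j, (ψ j - ψ' j) * ν j := by
    rw [integral_add (hint ψ) (integrable_finset_sum _ fun j _ => hindint j),
      integral_finset_sum _ (fun j _ => hindint j)]
    congr 1
    refine Finset.sum_congr rfl fun j _ => ?_
    rw [integral_indicator_const _ (hTmeas j), measureReal_def, hTmass j, hmass j, smul_eq_mul, mul_comm]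
  rw [hsplit] at hmono
  have hfinal : ∑ j, (ψ j - ψ' j) * ν j + ∑ j, ψ' j * ν j = ∑ j, ψ j * ν j := by
    rw [← Finset.sum_add_distrib]
    exact Finset.sum_congr rfl fun j _ => by ring
  simp only [hb] at hmono
  simp only [Kfun]
  linarith
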